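/- Assume Assumption (β) and let Ω ⊆ V be nonempty. Then h̃(Ω)²/8 ≤ ν(Δ̃^D_Ω) ≤ (1/2) h̃(Ω), where ν(Δ̃^D_Ω) = inf{ Re (Δ̃f, f)_{β⁺} : f finitely supported, supp f ⊆ Ω, ‖f‖_{β⁺} = 1 }. -/

import Mathlib

open Function Complex

noncomputable def betaPlus {V : Type*} (b : V → V → ℝ) (x : V) : ℝ := ∑ᶠ y, b x y
noncomputable def betaMinus {V : Type*} (b : V → V → ℝ) (x : V) : ℝ := ∑ᶠ y, b y x

/-- The Laplacian `Δf(x) = (1/m(x)) Σ_y b(x,y)(f(x) - f(y))`; the normalized Laplacian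
`Δ̃` is the case `m = β⁺`. -/
noncomputable def lap {V : Type*} (b : V → V → ℝ) (m : V → ℝ) (f : V → ℂ) (x : V) : ℂ :=
  (1 / (m x : ℂ)) * ∑ᶠ y, (b x y : ℂ) * (f x - f y)

/-- The weighted inner product `(f,g)_w = Σ_x w(x) f(x) conj(g(x))`. -/
noncomputable def innerW {V : Type*} (w : V → ℝ) (f g : V → ℂ) : ℂ :=
  ∑ᶠ x, (w x : ℂ) * f x * (starRingEnd ℂ) (g x)

/-- The total edge-boundary weight of a finite set `U`:
`b(∂_E U) = Σ_{x∈U, y∉U} b(x,y) + Σ_{x∉U, y∈U} b(x,y)`. -/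
noncomputable def bdryWeight {V : Type*} [DecidableEq V] (b : V → V → ℝ) (U : Finset V) :
    ℝ :=
  ∑ x ∈ U, ∑ᶠ y, (if y ∈ U then 0 else b x y + b y x)

/-- The Cheeger constant of `Ω ⊆ V` with respect to the weight `w`:
`h(Ω) = inf { b(∂_E U) / w(U) : U ⊆ Ω finite nonempty }`. -/
noncomputable def cheeger {V : Type*} [DecidableEq V] (b : V → V → ℝ) (w : V → ℝ)
    (Ω : Set V) : ℝ :=
  sInf {r : ℝ | ∃ U : Finset V, U.Nonempty ∧ ↑U ⊆ Ω ∧ r = bdryWeight b U / ∑ x ∈ U, w x}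

/-- The bottom of the real part of the numerical range of the Dirichlet Laplacian on `Ω`:
`ν(Δ^D_Ω) = inf { Re (Δf, f)_m : f finitely supported, supp f ⊆ Ω, ‖f‖_m = 1 }`. -/
noncomputable def nuD {V : Type*} (b : V → V → ℝ) (m : V → ℝ) (Ω : Set V) : ℝ :=
  sInf {r : ℝ | ∃ f : V → ℂ, (support f).Finite ∧ support f ⊆ Ω ∧
    innerW m f f = 1 ∧ r = (innerW m (lap b m f) f).re}

set_option linter.unusedSectionVars false
section Aux
variable {V : Type*} [DecidableEq V] {b : V → V → ℝ} {N : V → Finset V}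

lemma row_sum (hN : ∀ x y, b x y ≠ 0 → y ∈ N x ∧ x ∈ N y) {x : V} {G : Finset V}
    (hG : N x ⊆ G) : ∑ y ∈ G, b x y = betaPlus b x :=
  (finsum_eq_sum_of_support_subset _ (fun y hy => Finset.mem_coe.2 (hG (hN x y hy).1))).symm

lemma col_sum (hN : ∀ x y, b x y ≠ 0 → y ∈ N x ∧ x ∈ N y) {y : V} {G : Finset V}
    (hG : N y ⊆ G) : ∑ x ∈ G, b x y = betaMinus b y :=
  (finsum_eq_sum_of_support_subset _ (fun x hx => Finset.mem_coe.2 (hG (hN x y hx).2))).symm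

lemma dsum_row (hN : ∀ x y, b x y ≠ 0 → y ∈ N x ∧ x ∈ N y) (φ : V → ℝ) {K G : Finset V}
    (hφ : support φ ⊆ ↑K) (hNG : ∀ x ∈ K, N x ⊆ G) :
    ∑ x ∈ G, ∑ y ∈ G, b x y * φ x = ∑ x ∈ G, betaPlus b x * φ x := by
  refine Finset.sum_congr rfl fun x _ => ?_
  rw [← Finset.sum_mul]
  by_cases hx : φ x = 0
  · simp [hx]
  · rw [row_sum hN (hNG x (hφ hx))]

lemma dsum_col (hN : ∀ x y, b x y ≠ 0 → y ∈ N x ∧ x ∈ N y)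
    (hβ : ∀ x, betaPlus b x = betaMinus b x) (φ : V → ℝ) {K G : Finset V}
    (hφ : support φ ⊆ ↑K) (hNG : ∀ x ∈ K, N x ⊆ G) :
    ∑ x ∈ G, ∑ y ∈ G, b x y * φ y = ∑ y ∈ G, betaPlus b y * φ y := by
  rw [Finset.sum_comm]
  refine Finset.sum_congr rfl fun y _ => ?_
  rw [← Finset.sum_mul]
  by_cases hy : φ y = 0
  · simp [hy]
  · rw [col_sum hN (hNG y (hφ hy)), hβ]

lemma indicator_double_sum (hN : ∀ x y, b x y ≠ 0 → y ∈ N x ∧ x ∈ N y) {U G : Finset V}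
    (hUG : U ⊆ G) (hNG : ∀ x ∈ U, N x ⊆ G) :
    ∑ x ∈ G, ∑ y ∈ G, b x y * (if (x ∈ U) = (y ∈ U) then (0:ℝ) else 1) = bdryWeight b U := by
  have hbd : bdryWeight b U = ∑ x ∈ U, ∑ y ∈ G, (if y ∈ U then (0:ℝ) else b x y + b y x) := by
    refine Finset.sum_congr rfl fun x hx => ?_
    refine finsum_eq_sum_of_support_subset _ ?_
    intro y hy
    rw [mem_support] at hy
    by_cases hyU : y ∈ U
    · simp [hyU] at hy
    · rw [if_neg hyU] at hy
      rcases (by by_contra hc; push_neg at hc; rw [hc.1, hc.2] at hy; simp at hy :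
        b x y ≠ 0 ∨ b y x ≠ 0) with h | h
      · exact Finset.mem_coe.2 ((hNG x hx) (hN x y h).1)
      · exact Finset.mem_coe.2 ((hNG x hx) (hN y x h).2)
  rw [hbd]
  calc ∑ x ∈ G, ∑ y ∈ G, b x y * (if (x ∈ U) = (y ∈ U) then (0:ℝ) else 1)
      = ∑ x ∈ G, ∑ y ∈ G, ((if x ∈ U ∧ y ∉ U then b x y else 0)
          + (if y ∈ U ∧ x ∉ U then b x y else 0)) := by
        refine Finset.sum_congr rfl fun x _ => Finset.sum_congr rfl fun y _ => ?_
        by_cases hx : x ∈ U <;> by_cases hy : y ∈ U <;> simp [hx, hy]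
    _ = ∑ x ∈ G, ∑ y ∈ G, (if x ∈ U ∧ y ∉ U then b x y else 0)
        + ∑ x ∈ G, ∑ y ∈ G, (if y ∈ U ∧ x ∉ U then b x y else 0) := by
        simp [Finset.sum_add_distrib]
    _ = ∑ x ∈ G, ∑ y ∈ G, (if x ∈ U ∧ y ∉ U then b x y else 0)
        + ∑ x ∈ G, ∑ y ∈ G, (if x ∈ U ∧ y ∉ U then b y x else 0) := by
        congr 1
        rw [Finset.sum_comm]
    _ = ∑ x ∈ G, ∑ y ∈ G, (if x ∈ U then (if y ∈ U then (0:ℝ) else b x y + b y x) else 0) := by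
        rw [← Finset.sum_add_distrib]
        refine Finset.sum_congr rfl fun x _ => ?_
        rw [← Finset.sum_add_distrib]
        refine Finset.sum_congr rfl fun y _ => ?_
        by_cases hx : x ∈ U <;> by_cases hy : y ∈ U <;> simp [hx, hy]
    _ = ∑ x ∈ G, (if x ∈ U then ∑ y ∈ G, (if y ∈ U then (0:ℝ) else b x y + b y x) else 0) := by
        refine Finset.sum_congr rfl fun x _ => ?_
        by_cases hx : x ∈ U <;> simp [hx]
    _ = ∑ x ∈ U, (if x ∈ U then ∑ y ∈ G, (if y ∈ U then (0:ℝ) else b x y + b y x) else 0) :=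
        (Finset.sum_subset hUG (fun x _ hx => if_neg hx)).symm
    _ = ∑ x ∈ U, ∑ y ∈ G, (if y ∈ U then (0:ℝ) else b x y + b y x) :=
        Finset.sum_congr rfl fun x hx => if_pos hx

lemma innerW_self (w : V → ℝ) (f : V → ℂ) {G : Finset V} (hf : support f ⊆ ↑G) :
    innerW w f f = ((∑ x ∈ G, w x * Complex.normSq (f x) : ℝ) : ℂ) := by
  unfold innerW
  rw [finsum_eq_sum_of_support_subset _ (s := G)
    (fun x hx => hf (fun h => (by simp [h] at hx : False).elim))]
  push_cast
  refine Finset.sum_congr rfl fun x _ => ?_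
  rw [mul_assoc, Complex.mul_conj]

lemma lap_re_eq (hN : ∀ x y, b x y ≠ 0 → y ∈ N x ∧ x ∈ N y)
    (hβp : ∀ x, 0 < betaPlus b x) (hβ : ∀ x, betaPlus b x = betaMinus b x)
    (f : V → ℂ) {K G : Finset V} (hf : support f ⊆ ↑K) (hKG : K ⊆ G)
    (hNG : ∀ x ∈ K, N x ⊆ G) :
    (innerW (betaPlus b) (lap b (betaPlus b) f) f).re
      = (∑ x ∈ G, ∑ y ∈ G, b x y * Complex.normSq (f x - f y)) / 2 := by
  have hGf : support f ⊆ ↑G := hf.trans (by exact_mod_cast hKG)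
  have step1 : innerW (betaPlus b) (lap b (betaPlus b) f) f
      = ∑ x ∈ G, (∑ y ∈ G, (b x y : ℂ) * (f x - f y)) * (starRingEnd ℂ) (f x) := by
    unfold innerW
    rw [finsum_eq_sum_of_support_subset _ (s := G)
      (fun x hx => hGf (fun h => (by simp [h] at hx : False).elim))]
    refine Finset.sum_congr rfl fun x _ => ?_
    by_cases hfx : f x = 0
    · simp [hfx]
    · have hxK : x ∈ K := hf hfx
      have hlap : lap b (betaPlus b) f x
          = (1 / (betaPlus b x : ℂ)) * ∑ y ∈ G, (b x y : ℂ) * (f x - f y) := by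
        unfold lap
        rw [finsum_eq_sum_of_support_subset _ (s := G) ?_]
        intro y hy
        have hby : b x y ≠ 0 := by
          intro h0
          simp [h0] at hy
        exact Finset.mem_coe.2 ((hNG x hxK) (hN x y hby).1)
      rw [hlap]
      have hb0 : (betaPlus b x : ℂ) ≠ 0 := by exact_mod_cast (hβp x).ne'
      field_simp
  rw [step1, Complex.re_sum]
  have step2 : ∀ x ∈ G, ((∑ y ∈ G, (b x y : ℂ) * (f x - f y)) * (starRingEnd ℂ) (f x)).re
      = ∑ y ∈ G, b x y * ((Complex.normSq (f x - f y)
          + Complex.normSq (f x) - Complex.normSq (f y)) / 2) := by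
    intro x _
    rw [Finset.sum_mul, Complex.re_sum]
    refine Finset.sum_congr rfl fun y _ => ?_
    have h1 : (b x y : ℂ) * (f x - f y) * (starRingEnd ℂ) (f x)
        = (b x y : ℂ) * ((f x - f y) * (starRingEnd ℂ) (f x)) := by ring
    rw [h1]
    simp only [Complex.mul_re, Complex.ofReal_re, Complex.ofReal_im, zero_mul, sub_zero,
      Complex.sub_re, Complex.sub_im, Complex.conj_re, Complex.conj_im, Complex.normSq_apply]
    ring
  rw [Finset.sum_congr rfl step2]
  have expand : ∑ x ∈ G, ∑ y ∈ G, b x y * ((Complex.normSq (f x - f y)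
          + Complex.normSq (f x) - Complex.normSq (f y)) / 2)
      = ((∑ x ∈ G, ∑ y ∈ G, b x y * Complex.normSq (f x - f y))
        + (∑ x ∈ G, ∑ y ∈ G, b x y * Complex.normSq (f x))
        - (∑ x ∈ G, ∑ y ∈ G, b x y * Complex.normSq (f y))) / 2 := by
    simp only [← mul_div_assoc, ← Finset.sum_div]
    congr 1
    simp only [mul_add, mul_sub, Finset.sum_add_distrib, Finset.sum_sub_distrib]
  rw [expand,
    dsum_row hN (fun x => Complex.normSq (f x))
      (fun x hx => hf (fun h => hx (by simp [mem_support, h]))) hNG,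
    dsum_col hN hβ (fun x => Complex.normSq (f x))
      (fun x hx => hf (fun h => hx (by simp [mem_support, h]))) hNG]
  ring

lemma bdryWeight_nonneg (hb : ∀ x y, 0 ≤ b x y) (U : Finset V) : 0 ≤ bdryWeight b U :=
  Finset.sum_nonneg fun x _ => finsum_nonneg fun y => by
    by_cases h : y ∈ U
    · simp [h]
    · simpa [h] using add_nonneg (hb x y) (hb y x)

lemma cheeger_bddBelow (hb : ∀ x y, 0 ≤ b x y) (hβp : ∀ x, 0 < betaPlus b x) (Ω : Set V) :
    BddBelow {r : ℝ | ∃ U : Finset V, U.Nonempty ∧ ↑U ⊆ Ω ∧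
      r = bdryWeight b U / ∑ x ∈ U, betaPlus b x} := by
  refine ⟨0, ?_⟩
  rintro r ⟨U, hU, hUΩ, rfl⟩
  exact div_nonneg (bdryWeight_nonneg hb U) (Finset.sum_nonneg fun x _ => (hβp x).le)

lemma coarea (hb : ∀ x y, 0 ≤ b x y) (hN : ∀ x y, b x y ≠ 0 → y ∈ N x ∧ x ∈ N y)
    (hβp : ∀ x, 0 < betaPlus b x) (Ω : Set V) (G : Finset V) :
    ∀ n (S : Finset V) (φ : V → ℝ), S.card ≤ n → ↑S ⊆ Ω → (∀ x, 0 ≤ φ x) →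
    support φ ⊆ ↑S → S ⊆ G → (∀ x ∈ S, N x ⊆ G) →
    cheeger b (betaPlus b) Ω * ∑ x ∈ G, betaPlus b x * φ x
      ≤ ∑ x ∈ G, ∑ y ∈ G, b x y * |φ x - φ y| := by
  classical
  intro n
  induction n with
  | zero =>
    intro S φ hcard hSΩ hφ0 hsupp hSG hNG
    have hS : S = ∅ := Finset.card_eq_zero.mp (Nat.le_zero.mp hcard)
    have hz : ∀ x, φ x = 0 := by
      intro x
      by_contra hx
      have := hsupp hx
      simp [hS] at this
    simp only [hz, mul_zero, sub_zero, abs_zero, Finset.sum_const_zero, mul_zero]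
    exact le_refl 0
  | succ n ih =>
    intro S φ hcard hSΩ hφ0 hsupp hSG hNG
    set U : Finset V := S.filter (fun x => φ x ≠ 0) with hUdef
    have hUS : U ⊆ S := Finset.filter_subset _ _
    have hout : ∀ x ∉ U, φ x = 0 := by
      intro x hx
      by_contra hφx
      exact hx (Finset.mem_filter.2 ⟨hsupp hφx, hφx⟩)
    by_cases hU : U.Nonempty
    · obtain ⟨x₀, hx₀U, hmin⟩ := Finset.exists_min_image U φ hU
      set m := φ x₀ with hmdef
      have hm : 0 < m :=
        lt_of_le_of_ne (hφ0 x₀) (Ne.symm (Finset.mem_filter.1 hx₀U).2)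
      set φ' : V → ℝ := fun x => if x ∈ U then φ x - m else 0 with hφ'def
      have hφ'0 : ∀ x, 0 ≤ φ' x := by
        intro x
        by_cases hx : x ∈ U
        · simp only [hφ'def, if_pos hx]
          linarith [hmin x hx]
        · simp [hφ'def, hx]
      have hsupp' : support φ' ⊆ ↑(U.erase x₀) := by
        intro x hx
        rw [mem_support] at hx
        by_cases hxU : x ∈ U
        · simp only [hφ'def, if_pos hxU] at hx
          have hxne : x ≠ x₀ := by
            intro h
            rw [h] at hx
            exact hx (sub_self _)
          exact Finset.mem_coe.2 (Finset.mem_erase.2 ⟨hxne, hxU⟩)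
        · simp [hφ'def, hxU] at hx
      have habs : ∀ x y, |φ x - φ y|
          = m * |(if x ∈ U then (1:ℝ) else 0) - (if y ∈ U then (1:ℝ) else 0)|
            + |φ' x - φ' y| := by
        intro x y
        by_cases hx : x ∈ U <;> by_cases hy : y ∈ U
        · simp only [hφ'def, if_pos hx, if_pos hy]
          rw [sub_self, abs_zero, mul_zero, zero_add]
          congr 1
          ring
        · have hy0 : φ y = 0 := hout y hy
          simp only [hφ'def, if_pos hx, if_neg hy]
          rw [hy0, sub_zero, sub_zero, sub_zero, abs_one, mul_one,
            _root_.abs_of_nonneg (hφ0 x), _root_.abs_of_nonneg (by linarith [hmin x hx] : (0:ℝ) ≤ φ x - m)]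
          ring
        · have hx0 : φ x = 0 := hout x hx
          simp only [hφ'def, if_neg hx, if_pos hy]
          rw [hx0, zero_sub, zero_sub, zero_sub, abs_neg, abs_neg, abs_neg, abs_one, mul_one,
            _root_.abs_of_nonneg (hφ0 y), _root_.abs_of_nonneg (by linarith [hmin y hy] : (0:ℝ) ≤ φ y - m)]
          ring
        · simp [hφ'def, hx, hy, hout x hx, hout y hy]
      have hdecomp : ∀ x, φ x = m * (if x ∈ U then (1:ℝ) else 0) + φ' x := by
        intro x
        by_cases hx : x ∈ U
        · simp only [hφ'def, if_pos hx]
          ring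
        · simp [hφ'def, hx, hout x hx]
      -- mass of U
      have hUG : U ⊆ G := hUS.trans hSG
      set c := ∑ x ∈ U, betaPlus b x with hcdef
      have hc : 0 < c := Finset.sum_pos (fun x _ => hβp x) hU
      have hmass : ∑ x ∈ G, betaPlus b x * φ x
          = m * c + ∑ x ∈ G, betaPlus b x * φ' x := by
        have e1 : ∀ x ∈ G, betaPlus b x * φ x
            = m * (betaPlus b x * (if x ∈ U then (1:ℝ) else 0)) + betaPlus b x * φ' x := by
          intro x _
          rw [hdecomp x]
          ring
        rw [Finset.sum_congr rfl e1, Finset.sum_add_distrib, ← Finset.mul_sum]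
        congr 2
        calc ∑ x ∈ G, betaPlus b x * (if x ∈ U then (1:ℝ) else 0)
            = ∑ x ∈ G, (if x ∈ U then betaPlus b x else 0) := by
              refine Finset.sum_congr rfl fun x _ => ?_
              by_cases hx : x ∈ U <;> simp [hx]
          _ = ∑ x ∈ U, (if x ∈ U then betaPlus b x else 0) :=
              (Finset.sum_subset hUG (fun x _ hx => if_neg hx)).symm
          _ = c := Finset.sum_congr rfl fun x hx => if_pos hx
      -- boundary term
      have hbdry : ∑ x ∈ G, ∑ y ∈ G, b x y
            * |(if x ∈ U then (1:ℝ) else 0) - (if y ∈ U then (1:ℝ) else 0)|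
          = bdryWeight b U := by
        rw [← indicator_double_sum hN hUG (fun x hx => hNG x (hUS hx))]
        refine Finset.sum_congr rfl fun x _ => Finset.sum_congr rfl fun y _ => ?_
        by_cases hx : x ∈ U <;> by_cases hy : y ∈ U <;> simp [hx, hy]
      -- cheeger bound for U
      have hUΩ : ↑U ⊆ Ω := (Finset.coe_subset.2 hUS).trans hSΩ
      have hch : cheeger b (betaPlus b) Ω * c ≤ bdryWeight b U := by
        have hmem : bdryWeight b U / c ∈ {r : ℝ | ∃ U' : Finset V, U'.Nonempty ∧ ↑U' ⊆ Ω ∧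
            r = bdryWeight b U' / ∑ x ∈ U', betaPlus b x} := ⟨U, hU, hUΩ, rfl⟩
        have := csInf_le (cheeger_bddBelow hb hβp Ω) hmem
        rw [cheeger] at *
        calc sInf _ * c ≤ (bdryWeight b U / c) * c := by
              exact mul_le_mul_of_nonneg_right this hc.le
          _ = bdryWeight b U := div_mul_cancel₀ _ hc.ne'
      -- induction hypothesis
      have hcard' : (U.erase x₀).card ≤ n := by
        have h1 : (U.erase x₀).card < U.card := Finset.card_erase_lt_of_mem hx₀U
        have h2 : U.card ≤ S.card := Finset.card_le_card hUS
        omega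
      have hIH := ih (U.erase x₀) φ' hcard'
        ((Finset.coe_subset.2 ((Finset.erase_subset _ _).trans hUS)).trans hSΩ)
        hφ'0 hsupp' (((Finset.erase_subset _ _).trans hUS).trans hSG)
        (fun x hx => hNG x (hUS ((Finset.erase_subset _ _) hx)))
      -- combine
      have hrhs : ∑ x ∈ G, ∑ y ∈ G, b x y * |φ x - φ y|
          = m * bdryWeight b U + ∑ x ∈ G, ∑ y ∈ G, b x y * |φ' x - φ' y| := by
        have e2 : ∀ x ∈ G, ∀ y ∈ G, b x y * |φ x - φ y|
            = m * (b x y * |(if x ∈ U then (1:ℝ) else 0) - (if y ∈ U then (1:ℝ) else 0)|)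
              + b x y * |φ' x - φ' y| := by
          intro x _ y _
          rw [habs x y]
          ring
        rw [Finset.sum_congr rfl fun x hx => Finset.sum_congr rfl fun y hy => e2 x hx y hy]
        simp only [Finset.sum_add_distrib, ← Finset.mul_sum]
        rw [hbdry]
      rw [hmass, hrhs, mul_add]
      have h1 : cheeger b (betaPlus b) Ω * (m * c) ≤ m * bdryWeight b U := by
        have := mul_le_mul_of_nonneg_left hch hm.le
        calc cheeger b (betaPlus b) Ω * (m * c)
            = m * (cheeger b (betaPlus b) Ω * c) := by ring
          _ ≤ m * bdryWeight b U := this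
      linarith
    · have hz : ∀ x, φ x = 0 := by
        intro x
        by_contra hx
        exact hU ⟨x, Finset.mem_filter.2 ⟨hsupp hx, hx⟩⟩
      simp only [hz, mul_zero, sub_zero, abs_zero, Finset.sum_const_zero, mul_zero]
      exact le_refl 0

lemma nu_mem (hb : ∀ x y, 0 ≤ b x y) (hN : ∀ x y, b x y ≠ 0 → y ∈ N x ∧ x ∈ N y)
    (hβp : ∀ x, 0 < betaPlus b x) (hβ : ∀ x, betaPlus b x = betaMinus b x)
    (Ω : Set V) (U : Finset V) (hU : U.Nonempty) (hUΩ : ↑U ⊆ Ω) :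
    (bdryWeight b U / ∑ x ∈ U, betaPlus b x) / 2
      ∈ {r : ℝ | ∃ f : V → ℂ, (support f).Finite ∧ support f ⊆ Ω ∧
          innerW (betaPlus b) f f = 1 ∧ r = (innerW (betaPlus b) (lap b (betaPlus b) f) f).re} := by
  classical
  set c := ∑ x ∈ U, betaPlus b x with hcdef
  have hc : 0 < c := Finset.sum_pos (fun x _ => hβp x) hU
  set f : V → ℂ := fun x => if x ∈ U then (((Real.sqrt c)⁻¹ : ℝ) : ℂ) else 0 with hfdef
  have hsqrt : (0:ℝ) < Real.sqrt c := Real.sqrt_pos.2 hc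
  have hval : (((Real.sqrt c)⁻¹ : ℝ) : ℂ) ≠ 0 := by
    exact_mod_cast (inv_pos.2 hsqrt).ne'
  have hsf : support f = ↑U := by
    ext x
    by_cases hx : x ∈ U
    · simpa [hfdef, hx] using hsqrt.ne'
    · simp [hfdef, hx]
  have hnf : ∀ x ∈ U, Complex.normSq (f x) = c⁻¹ := by
    intro x hx
    simp only [hfdef, if_pos hx, Complex.normSq_ofReal]
    rw [← mul_inv, Real.mul_self_sqrt hc.le]
  set G : Finset V := U ∪ U.biUnion N with hGdef
  have hUG : U ⊆ G := Finset.subset_union_left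
  have hNG : ∀ x ∈ U, N x ⊆ G :=
    fun x hx => (Finset.subset_biUnion_of_mem N hx).trans Finset.subset_union_right
  have hnorm : innerW (betaPlus b) f f = 1 := by
    rw [innerW_self (betaPlus b) f (G := U) (by rw [hsf])]
    have : ∑ x ∈ U, betaPlus b x * Complex.normSq (f x) = ∑ x ∈ U, betaPlus b x * c⁻¹ :=
      Finset.sum_congr rfl fun x hx => by rw [hnf x hx]
    rw [this, ← Finset.sum_mul, ← hcdef, mul_inv_cancel₀ hc.ne']
    exact Complex.ofReal_one
  refine ⟨f, by rw [hsf]; exact U.finite_toSet, by rw [hsf]; exact hUΩ, hnorm, ?_⟩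
  rw [lap_re_eq hN hβp hβ f (K := U) (G := G) (by rw [hsf]) hUG hNG]
  have hterm : ∀ x ∈ G, ∀ y ∈ G, b x y * Complex.normSq (f x - f y)
      = c⁻¹ * (b x y * (if (x ∈ U) = (y ∈ U) then (0:ℝ) else 1)) := by
    intro x _ y _
    by_cases hx : x ∈ U <;> by_cases hy : y ∈ U <;>
      simp only [hfdef, if_pos, if_neg, hx, hy, if_true, if_false, sub_zero, zero_sub,
        sub_self, Complex.normSq_neg, Complex.normSq_zero, Complex.normSq_ofReal] <;>
      simp [hx, hy, ← mul_inv, Real.mul_self_sqrt hc.le] <;> ring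
  calc bdryWeight b U / c / 2
      = (c⁻¹ * bdryWeight b U) / 2 := by rw [inv_mul_eq_div]
    _ = (∑ x ∈ G, ∑ y ∈ G, b x y * Complex.normSq (f x - f y)) / 2 := by
        rw [← indicator_double_sum hN hUG hNG]
        congr 1
        rw [Finset.mul_sum]
        refine Finset.sum_congr rfl fun x hx => ?_
        rw [Finset.mul_sum]
        exact Finset.sum_congr rfl fun y hy => (hterm x hx y hy).symm

end Aux

/-- assume Assumption (β) and let `Ω ⊆ V` be nonempty. Then
`h̃(Ω)²/8 ≤ ν(Δ̃^D_Ω) ≤ (1/2) h̃(Ω)`. -/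
theorem cheeger_inequality_normalized
    (V : Type*) [Countable V] [DecidableEq V] (b : V → V → ℝ)
    (hb_nonneg : ∀ x y, 0 ≤ b x y)
    (hb_loop : ∀ x, b x x = 0)
    (hloc_fin : ∀ x, {y | b x y ≠ 0 ∨ b y x ≠ 0}.Finite)
    (hβp_pos : ∀ x, 0 < betaPlus b x)
    (hβm_pos : ∀ x, 0 < betaMinus b x)
    (hβ : ∀ x, betaPlus b x = betaMinus b x)
    (Ω : Set V) (hΩ : Ω.Nonempty) :
    (cheeger b (betaPlus b) Ω) ^ 2 / 8 ≤ nuD b (betaPlus b) Ω ∧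
    nuD b (betaPlus b) Ω ≤ cheeger b (betaPlus b) Ω / 2 := by
  classical
  set N : V → Finset V := fun x => (hloc_fin x).toFinset with hNdef
  have hN : ∀ x y, b x y ≠ 0 → y ∈ N x ∧ x ∈ N y := by
    intro x y hxy
    constructor
    · rw [hNdef, Set.Finite.mem_toFinset]
      exact Or.inl hxy
    · rw [hNdef, Set.Finite.mem_toFinset]
      exact Or.inr hxy
  set cheegSet := {r : ℝ | ∃ U : Finset V, U.Nonempty ∧ ↑U ⊆ Ω ∧
    r = bdryWeight b U / ∑ x ∈ U, betaPlus b x} with hcsdef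
  set nuSet := {r : ℝ | ∃ f : V → ℂ, (support f).Finite ∧ support f ⊆ Ω ∧
    innerW (betaPlus b) f f = 1 ∧
    r = (innerW (betaPlus b) (lap b (betaPlus b) f) f).re} with hnsdef
  obtain ⟨x₀, hx₀⟩ := hΩ
  have hcne : cheegSet.Nonempty :=
    ⟨_, ⟨{x₀}, Finset.singleton_nonempty x₀, by simpa using hx₀, rfl⟩⟩
  have hcbdd : BddBelow cheegSet := cheeger_bddBelow hb_nonneg hβp_pos Ω
  -- every element of nuSet equals a nonneg "energy"; useful derived form
  have hnu_form : ∀ r ∈ nuSet, ∃ (f : V → ℂ) (K G : Finset V),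
      support f ⊆ ↑K ∧ K ⊆ G ∧ (∀ x ∈ K, N x ⊆ G) ∧ ↑K ⊆ Ω ∧
      (∑ x ∈ G, betaPlus b x * Complex.normSq (f x)) = 1 ∧
      r = (∑ x ∈ G, ∑ y ∈ G, b x y * Complex.normSq (f x - f y)) / 2 := by
    rintro r ⟨f, hfin, hfΩ, hnorm, rfl⟩
    refine ⟨f, hfin.toFinset, hfin.toFinset ∪ hfin.toFinset.biUnion N, ?_, ?_, ?_, ?_, ?_, ?_⟩
    · rw [Set.Finite.coe_toFinset]
    · exact Finset.subset_union_left
    · exact fun x hx => (Finset.subset_biUnion_of_mem N hx).trans Finset.subset_union_right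
    · rw [Set.Finite.coe_toFinset]; exact hfΩ
    · have hsub : support f ⊆ ↑(hfin.toFinset ∪ hfin.toFinset.biUnion N) := fun x hx =>
        Finset.mem_coe.2 (Finset.mem_union_left _ (hfin.mem_toFinset.2 hx))
      have := innerW_self (betaPlus b) f hsub
      rw [hnorm] at this
      exact_mod_cast (Complex.ofReal_eq_one).1 this.symm
    · exact lap_re_eq hN hβp_pos hβ f (by rw [Set.Finite.coe_toFinset])
        Finset.subset_union_left
        (fun x hx => (Finset.subset_biUnion_of_mem N hx).trans Finset.subset_union_right)
  have hνbdd : BddBelow nuSet := by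
    refine ⟨0, ?_⟩
    intro r hr
    obtain ⟨f, K, G, _, _, _, _, _, hrq⟩ := hnu_form r hr
    rw [hrq]
    apply div_nonneg _ (by norm_num)
    exact Finset.sum_nonneg fun x _ => Finset.sum_nonneg fun y _ =>
      mul_nonneg (hb_nonneg x y) (Complex.normSq_nonneg _)
  have hνne : nuSet.Nonempty := ⟨_, nu_mem hb_nonneg hN hβp_pos hβ Ω {x₀}
    (Finset.singleton_nonempty x₀) (by simpa using hx₀)⟩
  have hge0 : 0 ≤ cheeger b (betaPlus b) Ω := by
    rw [cheeger]
    refine le_csInf hcne ?_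
    rintro r ⟨U, hU, hUΩ, rfl⟩
    exact div_nonneg (bdryWeight_nonneg hb_nonneg U)
      (Finset.sum_nonneg fun x _ => (hβp_pos x).le)
  constructor
  · -- lower bound
    rw [nuD]
    refine le_csInf hνne ?_
    intro r hr
    obtain ⟨f, K, G, hfK, hKG, hNG, hKΩ, hnorm1, hrq⟩ := hnu_form r hr
    set g : V → ℝ := fun x => ‖f x‖ with hgdef
    set S := ∑ x ∈ G, ∑ y ∈ G, b x y * Complex.normSq (f x - f y) with hSdef
    set P := ∑ x ∈ G, ∑ y ∈ G, b x y * (|g x - g y| * (g x + g y)) with hPdef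
    set T := ∑ x ∈ G, ∑ y ∈ G, b x y * (g x - g y) ^ 2 with hTdef
    set R := ∑ x ∈ G, ∑ y ∈ G, b x y * (g x + g y) ^ 2 with hRdef
    have hgsq : ∀ x, g x ^ 2 = Complex.normSq (f x) := fun x => Complex.sq_norm (f x)
    -- co-area gives h ≤ P
    have hca := coarea hb_nonneg hN hβp_pos Ω G K.card K
      (fun x => Complex.normSq (f x)) le_rfl hKΩ (fun x => Complex.normSq_nonneg _)
      (fun x hx => hfK (fun h => hx (by simp [mem_support, h]))) hKG hNG
    rw [hnorm1, mul_one] at hca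
    have habs_eq : ∀ x y, |Complex.normSq (f x) - Complex.normSq (f y)|
        = |g x - g y| * (g x + g y) := by
      intro x y
      rw [← hgsq, ← hgsq]
      have h1 : g x ^ 2 - g y ^ 2 = (g x - g y) * (g x + g y) := by ring
      rw [h1, abs_mul, _root_.abs_of_nonneg (add_nonneg (norm_nonneg _) (norm_nonneg _))]
    have hhP : cheeger b (betaPlus b) Ω ≤ P := by
      refine le_trans hca (le_of_eq ?_)
      refine Finset.sum_congr rfl fun x _ => Finset.sum_congr rfl fun y _ => ?_
      rw [habs_eq]
    -- Cauchy-Schwarz: P^2 ≤ T * R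
    have hCS := Finset.sum_mul_sq_le_sq_mul_sq (G ×ˢ G)
      (fun p => Real.sqrt (b p.1 p.2) * |g p.1 - g p.2|)
      (fun p => Real.sqrt (b p.1 p.2) * (g p.1 + g p.2))
    have hPprod : ∑ p ∈ G ×ˢ G, (Real.sqrt (b p.1 p.2) * |g p.1 - g p.2|)
        * (Real.sqrt (b p.1 p.2) * (g p.1 + g p.2)) = P := by
      rw [hPdef, Finset.sum_product]
      refine Finset.sum_congr rfl fun x _ => Finset.sum_congr rfl fun y _ => ?_
      rw [show (Real.sqrt (b x y) * |g x - g y|) * (Real.sqrt (b x y) * (g x + g y))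
        = (Real.sqrt (b x y) * Real.sqrt (b x y)) * (|g x - g y| * (g x + g y)) by ring,
        Real.mul_self_sqrt (hb_nonneg x y)]
    have hTprod : ∑ p ∈ G ×ˢ G, (Real.sqrt (b p.1 p.2) * |g p.1 - g p.2|) ^ 2 = T := by
      rw [hTdef, Finset.sum_product]
      refine Finset.sum_congr rfl fun x _ => Finset.sum_congr rfl fun y _ => ?_
      rw [mul_pow, Real.sq_sqrt (hb_nonneg x y), _root_.sq_abs]
    have hRprod : ∑ p ∈ G ×ˢ G, (Real.sqrt (b p.1 p.2) * (g p.1 + g p.2)) ^ 2 = R := by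
      rw [hRdef, Finset.sum_product]
      refine Finset.sum_congr rfl fun x _ => Finset.sum_congr rfl fun y _ => ?_
      rw [mul_pow, Real.sq_sqrt (hb_nonneg x y)]
    rw [hPprod, hTprod, hRprod] at hCS
    -- T ≤ S
    have hTS : T ≤ S := by
      refine Finset.sum_le_sum fun x _ => Finset.sum_le_sum fun y _ => ?_
      refine mul_le_mul_of_nonneg_left ?_ (hb_nonneg x y)
      rw [← _root_.sq_abs (g x - g y)]
      rw [show Complex.normSq (f x - f y) = ‖f x - f y‖ ^ 2 from (Complex.sq_norm _).symm]
      exact pow_le_pow_left₀ (abs_nonneg _) (abs_norm_sub_norm_le (f x) (f y)) 2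
    -- R ≤ 4
    have hRle : R ≤ 4 := by
      have step : R ≤ ∑ x ∈ G, ∑ y ∈ G,
          (2 * (b x y * Complex.normSq (f x)) + 2 * (b x y * Complex.normSq (f y))) := by
        refine Finset.sum_le_sum fun x _ => Finset.sum_le_sum fun y _ => ?_
        have h2 : (g x + g y) ^ 2 ≤ 2 * Complex.normSq (f x) + 2 * Complex.normSq (f y) := by
          rw [← hgsq, ← hgsq]
          nlinarith [sq_nonneg (g x - g y)]
        nlinarith [hb_nonneg x y, mul_le_mul_of_nonneg_left h2 (hb_nonneg x y)]
      have hsupnf : support (fun x => Complex.normSq (f x)) ⊆ ↑K :=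
        fun x hx => hfK (fun h => hx (by simp [mem_support, h]))
      calc R ≤ _ := step
        _ = 2 * (∑ x ∈ G, ∑ y ∈ G, b x y * Complex.normSq (f x))
            + 2 * (∑ x ∈ G, ∑ y ∈ G, b x y * Complex.normSq (f y)) := by
          simp only [Finset.sum_add_distrib, ← Finset.mul_sum]
        _ = 2 * 1 + 2 * 1 := by
          rw [dsum_row hN _ hsupnf hNG, dsum_col hN hβ _ hsupnf hNG, hnorm1]
        _ = 4 := by norm_num
    -- combine
    have hSnn : 0 ≤ S := Finset.sum_nonneg fun x _ => Finset.sum_nonneg fun y _ =>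
      mul_nonneg (hb_nonneg x y) (Complex.normSq_nonneg _)
    have hRnn : 0 ≤ R := Finset.sum_nonneg fun x _ => Finset.sum_nonneg fun y _ =>
      mul_nonneg (hb_nonneg x y) (sq_nonneg _)
    have hsq : cheeger b (betaPlus b) Ω ^ 2 ≤ P ^ 2 := pow_le_pow_left₀ hge0 hhP 2
    have hTR : T * R ≤ S * 4 := mul_le_mul hTS hRle hRnn hSnn
    rw [hrq]
    nlinarith
  · -- upper bound
    have key : ∀ r ∈ cheegSet, nuD b (betaPlus b) Ω ≤ r / 2 := by
      rintro r ⟨U, hU, hUΩ, rfl⟩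
      rw [nuD]
      exact csInf_le hνbdd (nu_mem hb_nonneg hN hβp_pos hβ Ω U hU hUΩ)
    have h2 : 2 * nuD b (betaPlus b) Ω ≤ cheeger b (betaPlus b) Ω := by
      rw [cheeger]
      refine le_csInf hcne fun r hr => ?_
      have := key r hr
      linarith
    linarith
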